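/- (Clarkson–Shor bound.) Let F be a finite family of clusters with sizes w(C) ∈ ℕ and total size n = Σ_{C∈F} w(C), let a ≥ 1 be an integer, and let I be a finite set of configurations, where each configuration i ∈ I is assigned a defining set A_i ⊆ F with |A_i| = a and a conflicting set B_i ⊆ F disjoint from A_i, with distinct configurations having distinct pairs (A_i,B_i). For a subfamily G ⊆ F, let N_0(G) denote the number of configurations i with A_i ⊆ G and B_i ∩ G = ∅. Suppose there is a real α ≥ 0 such that N_0(G) ≤ α·Σ_{C∈G} w(C) for every subfamily G ⊆ F. Then for every integer k ≥ 1, the number of configurations i with |B_i| ≤ k is at most e·(k+1)^{a−1}·α·n. -/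

import Mathlib

open Finset in
private lemma sum_mu_one {ι : Type*} [DecidableEq ι] (S : Finset ι) (p : ℝ) :
    ∑ H ∈ S.powerset, p ^ H.card * (1 - p) ^ (S \ H).card = 1 := by
  have h := Finset.prod_add (fun _ : ι => p) (fun _ => 1 - p) S
  simp only [Finset.prod_const] at h
  rw [← h, show p + (1 - p) = 1 from by ring, one_pow]

open Finset in
private lemma sum_mu {ι : Type*} [DecidableEq ι] (F : Finset ι) (p : ℝ)
    (A B : Finset ι) (hA : A ⊆ F) (hB : B ⊆ F) (hAB : Disjoint A B) :
    ∑ G ∈ F.powerset.filter (fun G => A ⊆ G ∧ Disjoint B G),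
      p ^ G.card * (1 - p) ^ (F \ G).card = p ^ A.card * (1 - p) ^ B.card := by
  classical
  set S := F \ (A ∪ B) with hS
  rw [show p ^ A.card * (1 - p) ^ B.card
      = ∑ H ∈ S.powerset, p ^ A.card * (1 - p) ^ B.card * (p ^ H.card * (1 - p) ^ (S \ H).card)
      from by rw [← Finset.mul_sum, sum_mu_one]; ring]
  refine Finset.sum_nbij' (fun G => G \ A) (fun H => A ∪ H) ?_ ?_ ?_ ?_ ?_
  · intro G hG
    simp only [Finset.mem_filter, Finset.mem_powerset] at hG ⊢
    obtain ⟨hGF, hAG, hBG⟩ := hG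
    intro x hx
    simp only [Finset.mem_sdiff, Finset.mem_union, hS] at hx ⊢
    exact ⟨hGF hx.1, fun h => h.elim hx.2 (fun hb => Finset.disjoint_left.mp hBG hb hx.1)⟩
  · intro H hH
    simp only [Finset.mem_powerset] at hH
    simp only [Finset.mem_filter, Finset.mem_powerset]
    have hHS : ∀ x ∈ H, x ∈ S := fun x hx => hH hx
    refine ⟨Finset.union_subset hA fun x hx => (Finset.mem_sdiff.mp (hHS x hx)).1,
      Finset.subset_union_left, ?_⟩
    rw [Finset.disjoint_union_right]
    refine ⟨hAB.symm, Finset.disjoint_left.mpr fun x hxB hxH => ?_⟩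
    have := Finset.mem_sdiff.mp (hHS x hxH)
    exact this.2 (Finset.mem_union_right _ hxB)
  · intro G hG
    simp only [Finset.mem_filter, Finset.mem_powerset] at hG
    rw [Finset.union_sdiff_self_eq_union, Finset.union_eq_right.mpr hG.2.1]
  · intro H hH
    simp only [Finset.mem_powerset] at hH
    refine Finset.union_sdiff_cancel_left (Finset.disjoint_left.mpr fun x hxA hxH => ?_)
    exact (Finset.mem_sdiff.mp (hH hxH)).2 (Finset.mem_union_left _ hxA)
  · intro G hG
    simp only [Finset.mem_filter, Finset.mem_powerset] at hG
    obtain ⟨hGF, hAG, hBG⟩ := hG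
    have hsub : G \ A ⊆ S := by
      intro x hx
      simp only [Finset.mem_sdiff, Finset.mem_union, hS] at hx ⊢
      exact ⟨hGF hx.1, fun h => h.elim hx.2 (fun hb => Finset.disjoint_left.mp hBG hb hx.1)⟩
    have e1 := Finset.card_sdiff_of_subset hAG
    have e2 := Finset.card_sdiff_of_subset hsub
    have e3 : S.card = F.card - (A.card + B.card) := by
      rw [hS, Finset.card_sdiff_of_subset (Finset.union_subset hA hB), Finset.card_union_of_disjoint hAB]
    have l1 := Finset.card_le_card hAG
    have l2 := Finset.card_le_card hGF
    have l3 := Finset.card_le_card hsub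
    have l4 := Finset.card_le_card (Finset.union_subset hA hB)
    rw [Finset.card_union_of_disjoint hAB] at l4
    have h1 : G.card = A.card + (G \ A).card := by omega
    have h2 : (F \ G).card = B.card + (S \ (G \ A)).card := by
      rw [Finset.card_sdiff_of_subset hGF]; omega
    rw [h1, h2, pow_add, pow_add]
    ring

open Classical in
/-- Clarkson–Shor bound: if every subfamily `G ⊆ F` has at most
`α · (total size of G)` zero-weight configurations, then for every `k ≥ 1` the number
of configurations of weight at most `k` is at most `e · (k+1)^(a-1) · α · n`. -/
theorem clarkson_shor_bound
    {ι κ : Type*} (F : Finset ι) (w : ι → ℕ) (n : ℕ)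
    (hn : ∑ C ∈ F, w C = n) (a : ℕ) (ha : 1 ≤ a)
    (I : Finset κ) (A B : κ → Finset ι)
    (hA : ∀ i ∈ I, (A i).card = a)
    (hAsub : ∀ i ∈ I, A i ⊆ F) (hBsub : ∀ i ∈ I, B i ⊆ F)
    (hdisj : ∀ i ∈ I, Disjoint (A i) (B i))
    (hinj : ∀ i ∈ I, ∀ j ∈ I, A i = A j → B i = B j → i = j)
    (α : ℝ) (hα : 0 ≤ α)
    (hCS : ∀ G ⊆ F,
      ((I.filter fun i => A i ⊆ G ∧ (B i : Set ι) ∩ (G : Set ι) = ∅).card : ℝ)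
        ≤ α * ∑ C ∈ G, (w C : ℝ))
    (k : ℕ) (hk : 1 ≤ k) :
    ((I.filter fun i => (B i).card ≤ k).card : ℝ)
      ≤ Real.exp 1 * ((k : ℝ) + 1) ^ (a - 1) * α * (n : ℝ) := by
  classical
  have hk0 : (0:ℝ) < (k:ℝ) := by exact_mod_cast hk
  have hk1 : (0:ℝ) < (k:ℝ) + 1 := by linarith
  set p : ℝ := 1 / ((k : ℝ) + 1) with hp
  have hp0 : 0 < p := by positivity
  have h1p : 0 < 1 - p := by
    have : p < 1 := by rw [hp, div_lt_one hk1]; linarith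
    linarith
  have hp1 : p ≤ 1 := by linarith
  set μ : Finset ι → ℝ := fun G => p ^ G.card * (1 - p) ^ (F \ G).card with hμ
  have hμ0 : ∀ G, 0 ≤ μ G := fun G => by
    have := hp0.le; have := h1p.le; positivity
  -- pointwise cluster probability
  have point : ∀ C ∈ F, ∑ G ∈ F.powerset.filter (fun G => C ∈ G), μ G = p := by
    intro C hC
    have h := sum_mu F p {C} ∅ (Finset.singleton_subset_iff.mpr hC) (Finset.empty_subset F)
      (Finset.disjoint_empty_right _)
    simp only [Finset.card_singleton, Finset.card_empty, pow_one, pow_zero, mul_one] at h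
    rw [← h]
    apply Finset.sum_congr _ (fun _ _ => rfl)
    apply Finset.filter_congr
    intro G _
    simp [Finset.singleton_subset_iff]
  -- configuration probability
  have conf : ∀ i ∈ I,
      ∑ G ∈ F.powerset.filter
        (fun G => A i ⊆ G ∧ (B i : Set ι) ∩ (G : Set ι) = ∅), μ G
      = p ^ a * (1 - p) ^ (B i).card := by
    intro i hi
    have h := sum_mu F p (A i) (B i) (hAsub i hi) (hBsub i hi) (hdisj i hi)
    rw [hA i hi] at h
    rw [← h]
    apply Finset.sum_congr _ (fun _ _ => rfl)
    apply Finset.filter_congr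
    intro G _
    rw [← Finset.disjoint_coe, Set.disjoint_iff_inter_eq_empty]
  -- Step B : expected number of zero-weight configurations is at most α p n
  have stepB : ∑ G ∈ F.powerset,
      μ G * ((I.filter fun i => A i ⊆ G ∧ (B i : Set ι) ∩ (G : Set ι) = ∅).card : ℝ)
      ≤ α * (p * n) := by
    calc ∑ G ∈ F.powerset,
        μ G * ((I.filter fun i => A i ⊆ G ∧ (B i : Set ι) ∩ (G : Set ι) = ∅).card : ℝ)
        ≤ ∑ G ∈ F.powerset, μ G * (α * ∑ C ∈ G, (w C : ℝ)) := by
          refine Finset.sum_le_sum fun G hG => ?_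
          exact mul_le_mul_of_nonneg_left (hCS G (Finset.mem_powerset.mp hG)) (hμ0 G)
      _ = α * ∑ G ∈ F.powerset, ∑ C ∈ F, (if C ∈ G then μ G * (w C : ℝ) else 0) := by
          rw [Finset.mul_sum]
          refine Finset.sum_congr rfl fun G hG => ?_
          rw [Finset.sum_ite_mem, Finset.inter_eq_right.mpr (Finset.mem_powerset.mp hG),
            ← Finset.mul_sum]
          ring
      _ = α * ∑ C ∈ F, (w C : ℝ) * ∑ G ∈ F.powerset.filter (fun G => C ∈ G), μ G := by
          rw [Finset.sum_comm]
          congr 1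
          refine Finset.sum_congr rfl fun C hC => ?_
          rw [Finset.mul_sum, ← Finset.sum_filter]
          exact Finset.sum_congr rfl fun G _ => mul_comm _ _
      _ = α * (p * n) := by
          rw [show ∑ C ∈ F, (w C : ℝ) * ∑ G ∈ F.powerset.filter (fun G => C ∈ G), μ G
              = ∑ C ∈ F, (w C : ℝ) * p from
            Finset.sum_congr rfl fun C hC => by rw [point C hC]]
          rw [← Finset.sum_mul, ← Nat.cast_sum, hn]
          ring
  -- Step C : lower bound for the expectation
  have stepC : ((I.filter fun i => (B i).card ≤ k).card : ℝ) * (p ^ a * (1 - p) ^ k)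
      ≤ ∑ G ∈ F.powerset,
        μ G * ((I.filter fun i => A i ⊆ G ∧ (B i : Set ι) ∩ (G : Set ι) = ∅).card : ℝ) := by
    have swap : ∑ G ∈ F.powerset,
        μ G * ((I.filter fun i => A i ⊆ G ∧ (B i : Set ι) ∩ (G : Set ι) = ∅).card : ℝ)
        = ∑ i ∈ I, ∑ G ∈ F.powerset.filter
            (fun G => A i ⊆ G ∧ (B i : Set ι) ∩ (G : Set ι) = ∅), μ G := by
      have h1 : ∀ G : Finset ι,
          ((I.filter fun i => A i ⊆ G ∧ (B i : Set ι) ∩ (G : Set ι) = ∅).card : ℝ)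
          = ∑ i ∈ I, (if A i ⊆ G ∧ (B i : Set ι) ∩ (G : Set ι) = ∅ then (1:ℝ) else 0) := by
        intro G
        rw [Finset.card_filter]
        push_cast
        rfl
      calc ∑ G ∈ F.powerset,
          μ G * ((I.filter fun i => A i ⊆ G ∧ (B i : Set ι) ∩ (G : Set ι) = ∅).card : ℝ)
          = ∑ G ∈ F.powerset, ∑ i ∈ I,
              (if A i ⊆ G ∧ (B i : Set ι) ∩ (G : Set ι) = ∅ then μ G else 0) := by
            refine Finset.sum_congr rfl fun G _ => ?_
            rw [h1 G, Finset.mul_sum]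
            exact Finset.sum_congr rfl fun i _ => by
              by_cases h : A i ⊆ G ∧ (B i : Set ι) ∩ (G : Set ι) = ∅ <;> simp [h]
        _ = ∑ i ∈ I, ∑ G ∈ F.powerset,
              (if A i ⊆ G ∧ (B i : Set ι) ∩ (G : Set ι) = ∅ then μ G else 0) :=
            Finset.sum_comm
        _ = ∑ i ∈ I, ∑ G ∈ F.powerset.filter
              (fun G => A i ⊆ G ∧ (B i : Set ι) ∩ (G : Set ι) = ∅), μ G := by
            exact Finset.sum_congr rfl fun i _ => (Finset.sum_filter _ _).symm
    rw [swap]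
    calc ((I.filter fun i => (B i).card ≤ k).card : ℝ) * (p ^ a * (1 - p) ^ k)
        = ∑ i ∈ I.filter (fun i => (B i).card ≤ k), p ^ a * (1 - p) ^ k := by
          rw [Finset.sum_const, nsmul_eq_mul]
      _ ≤ ∑ i ∈ I.filter (fun i => (B i).card ≤ k), p ^ a * (1 - p) ^ (B i).card := by
          refine Finset.sum_le_sum fun i hi => ?_
          have hbk : (B i).card ≤ k := (Finset.mem_filter.mp hi).2
          exact mul_le_mul_of_nonneg_left
            (pow_le_pow_of_le_one h1p.le (by linarith) hbk) (by positivity)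
      _ ≤ ∑ i ∈ I, p ^ a * (1 - p) ^ (B i).card := by
          refine Finset.sum_le_sum_of_subset_of_nonneg (Finset.filter_subset _ _)
            fun i _ _ => by positivity
      _ = ∑ i ∈ I, ∑ G ∈ F.powerset.filter
            (fun G => A i ⊆ G ∧ (B i : Set ι) ∩ (G : Set ι) = ∅), μ G :=
          (Finset.sum_congr rfl fun i hi => (conf i hi).symm)
  have main : ((I.filter fun i => (B i).card ≤ k).card : ℝ) * (p ^ a * (1 - p) ^ k)
      ≤ α * (p * n) := le_trans stepC stepB
  -- the exponential bound
  have hone : (1 + 1 / (k:ℝ)) * (1 - p) = 1 := by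
    rw [hp]; field_simp; ring
  have hek : (1 + 1 / (k:ℝ)) ^ k ≤ Real.exp 1 := by
    calc (1 + 1 / (k:ℝ)) ^ k ≤ (Real.exp (1 / (k:ℝ))) ^ k := by
          refine pow_le_pow_left₀ (by positivity) ?_ k
          have := Real.add_one_le_exp (1 / (k:ℝ))
          linarith
      _ = Real.exp 1 := by
          rw [← Real.exp_nat_mul, mul_one_div, div_self (ne_of_gt hk0)]
  have hexp : 1 ≤ Real.exp 1 * (1 - p) ^ k := by
    calc (1:ℝ) = ((1 + 1 / (k:ℝ)) * (1 - p)) ^ k := by rw [hone]; exact (one_pow k).symm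
      _ = (1 + 1 / (k:ℝ)) ^ k * (1 - p) ^ k := mul_pow _ _ _
      _ ≤ Real.exp 1 * (1 - p) ^ k :=
          mul_le_mul_of_nonneg_right hek (by positivity)
  -- final arithmetic
  have hkp : ((k:ℝ) + 1) * p = 1 := by rw [hp]; field_simp
  have hX : (0:ℝ) < p ^ a * (1 - p) ^ k := by positivity
  rw [← mul_le_mul_iff_of_pos_right hX]
  refine le_trans main ?_
  have hsplit : p ^ a = p ^ (a - 1) * p := by
    conv_lhs => rw [show a = (a - 1) + 1 from (Nat.succ_pred_eq_of_pos ha).symm]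
    rw [pow_succ]
  calc α * (p * n) = (α * n * p) * 1 := by ring
    _ ≤ (α * n * p) * (Real.exp 1 * (1 - p) ^ k) := by
        refine mul_le_mul_of_nonneg_left hexp ?_
        positivity
    _ = Real.exp 1 * ((k:ℝ) + 1) ^ (a - 1) * α * n * (p ^ a * (1 - p) ^ k) := by
        rw [hsplit]
        rw [show Real.exp 1 * ((k:ℝ) + 1) ^ (a-1) * α * ↑n * (p ^ (a-1) * p * (1-p)^k)
            = (α * ↑n * p) * (Real.exp 1 * (1-p)^k) * ((((k:ℝ)+1) * p) ^ (a-1)) from by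
          rw [mul_pow]; ring]
        rw [hkp, one_pow, mul_one]
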